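/- arXiv:1605.08244 — 2 statements merged into one kernel-verified Lean document; each statement's English description precedes it below -/
import Mathlib

section
/- If λ is an element of the profinite completion Ẑ of the integers, n is a nonzero integer, and the product λ·n lies in the image of ℤ in Ẑ, then λ itself lies in the image of ℤ. -/
/-- The profinite completion of `ℤ`, realised as the subring of compatible
families in `∏ n, ZMod n` (the inverse limit of the rings `ℤ/nℤ`). -/
def ZHatSubring : Subring (∀ n : ℕ+, ZMod n) where
  carrier := {f | ∀ (m n : ℕ+) (h : (m : ℕ) ∣ (n : ℕ)),
    ZMod.castHom h (ZMod m) (f n) = f m}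
  mul_mem' := by
    intro a b ha hb m n h
    simp only [Pi.mul_apply, map_mul, ha m n h, hb m n h]
  one_mem' := by
    intro m n h
    exact map_one (ZMod.castHom h (ZMod m))
  add_mem' := by
    intro a b ha hb m n h
    simp only [Pi.add_apply, map_add, ha m n h, hb m n h]
  zero_mem' := by
    intro m n h
    exact map_zero (ZMod.castHom h (ZMod m))
  neg_mem' := by
    intro a ha m n h
    simp only [Pi.neg_apply, map_neg, ha m n h]

/-- `Ẑ`, the profinite completion of the integers. -/
abbrev ZHat : Type := ZHatSubring

/-- If `λ ∈ Ẑ`, `n` is a nonzero integer, and `λ·n` lies in the image of `ℤ`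
in `Ẑ`, then `λ` lies in the image of `ℤ`. -/
theorem zhat_int_of_mul_int (lam : ZHat) (n : ℤ) (hn : n ≠ 0)
    (h : lam * (n : ZHat) ∈ Set.range (Int.cast : ℤ → ZHat)) :
    lam ∈ Set.range (Int.cast : ℤ → ZHat) := by
  obtain ⟨z, hz⟩ := h
  have hcomp : ∀ m : ℕ+, lam.1 m * (n : ZMod m) = (z : ZMod m) := by
    intro m
    have := congrFun (congrArg Subtype.val hz) m
    simpa using this.symm
  have hN0 : 0 < n.natAbs := Int.natAbs_pos.mpr hn
  set N : ℕ+ := ⟨n.natAbs, hN0⟩ with hNdef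
  have hNn : ((N : ℕ) : ℤ) ∣ n := Int.natAbs_dvd.mpr dvd_rfl
  have hz0 : (n : ZMod N) = 0 := (ZMod.intCast_zmod_eq_zero_iff_dvd n N).mpr hNn
  have hdvdz : n ∣ z := by
    have := hcomp N
    rw [hz0, mul_zero] at this
    have h2 : ((N : ℕ) : ℤ) ∣ z := (ZMod.intCast_zmod_eq_zero_iff_dvd z N).mp this.symm
    exact Int.natAbs_dvd.mp h2
  obtain ⟨q, hq⟩ := hdvdz
  refine ⟨q, ?_⟩
  apply Subtype.ext
  funext m
  have hdvd : (m : ℕ) ∣ ((m * N : ℕ+) : ℕ) := ⟨N, by simp⟩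
  have hcompat := lam.2 m (m * N) hdvd
  set a : ℤ := ((lam.1 (m * N)).val : ℤ) with hadef
  have ha : (a : ZMod (m * N : ℕ+)) = lam.1 (m * N) := by
    haveI : NeZero ((m * N : ℕ+) : ℕ) := ⟨(m * N).ne_zero⟩
    rw [hadef, Int.cast_natCast]
    exact ZMod.natCast_zmod_val _
  have key : ((m * N : ℕ+) : ℤ) ∣ a * n - z := by
    have h3 := hcomp (m * N)
    rw [← ha, ← Int.cast_mul] at h3
    have h4 := sub_eq_zero.mpr h3
    rw [← Int.cast_sub] at h4
    exact (ZMod.intCast_zmod_eq_zero_iff_dvd _ _).mp h4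
  have key1 : ((m : ℕ) * n.natAbs : ℤ) ∣ n * (a - q) := by
    have e1 : a * n - z = n * (a - q) := by rw [hq]; ring
    have e2 : ((m * N : ℕ+) : ℤ) = ((m : ℕ) * n.natAbs : ℤ) := by
      exact (congrArg (Nat.cast : ℕ → ℤ) (PNat.mul_coe m N)).trans (Nat.cast_mul _ _)
    rw [e1, e2] at key
    exact key
  have key2 : (m : ℤ) ∣ a - q := by
    have hNa : ((n.natAbs : ℤ)) ≠ 0 := by exact_mod_cast Int.natAbs_ne_zero.mpr hn
    have key' : ((n.natAbs : ℤ)) * (m : ℤ) ∣ (n.natAbs : ℤ) * (a - q) := by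
      have heq : ((n.natAbs : ℤ)) * (m : ℤ) = ((m:ℕ) * n.natAbs : ℤ) := by push_cast; ring
      rcases Int.natAbs_eq n with hcase | hcase
      · have h2 : n * (a - q) = (n.natAbs : ℤ) * (a - q) := by rw [← hcase]
        rw [h2] at key1
        rw [heq]; exact key1
      · have h2 : n * (a - q) = -((n.natAbs : ℤ) * (a - q)) := by
          conv_lhs => rw [hcase]
          ring
        rw [h2, dvd_neg] at key1
        rw [heq]; exact key1
    exact (mul_dvd_mul_iff_left hNa).mp key'
  have hm : lam.1 m = (q : ZMod m) := by
    rw [← hcompat, ← ha, map_intCast, ZMod.intCast_eq_intCast_iff]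
    exact (Int.modEq_iff_dvd.mpr (by simpa using (dvd_neg.mpr key2))).symm.symm
  simp only [hm]
  have : ((q : ZHat) : ∀ k : ℕ+, ZMod k) = ((q : ℤ) : ∀ k : ℕ+, ZMod k) := by
    push_cast
    rfl
  rw [this]
  rfl
end

section
/- Let F be the free group on two generators a, b. Then for every prime p, the commutator [a,b] is not a p-th power in F: there is a finite p-group quotient of F in which the image of [a,b] is not a p-th power. -/
open commutatorElement

@[ext] structure Heis (n : ℕ) where
  x : ZMod n
  y : ZMod n
  z : ZMod n

namespace Heis
variable {n : ℕ}

instance : Mul (Heis n) := ⟨fun a b => ⟨a.x + b.x, a.y + b.y, a.z + b.z + a.x * b.y⟩⟩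
instance : One (Heis n) := ⟨⟨0, 0, 0⟩⟩
instance : Inv (Heis n) := ⟨fun a => ⟨-a.x, -a.y, -a.z + a.x * a.y⟩⟩

lemma mul_def (a b : Heis n) : a * b = ⟨a.x + b.x, a.y + b.y, a.z + b.z + a.x * b.y⟩ := rfl
lemma one_def : (1 : Heis n) = ⟨0, 0, 0⟩ := rfl
lemma inv_def (a : Heis n) : a⁻¹ = ⟨-a.x, -a.y, -a.z + a.x * a.y⟩ := rfl

instance : Group (Heis n) where
  mul_assoc a b c := by ext <;> simp [mul_def] <;> ring
  one_mul a := by ext <;> simp [mul_def, one_def]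
  mul_one a := by ext <;> simp [mul_def, one_def]
  inv_mul_cancel a := by ext <;> simp [mul_def, inv_def, one_def]

def equivProd : Heis n ≃ (ZMod n × ZMod n × ZMod n) where
  toFun a := (a.x, a.y, a.z)
  invFun a := ⟨a.1, a.2.1, a.2.2⟩
  left_inv _ := rfl
  right_inv _ := rfl

instance [NeZero n] : Finite (Heis n) := Finite.of_equiv _ equivProd.symm

lemma pow_def (a : Heis n) (k : ℕ) :
    a ^ k = ⟨(k : ZMod n) * a.x, (k : ZMod n) * a.y,
      (k : ZMod n) * a.z + (k.choose 2 : ZMod n) * (a.x * a.y)⟩ := by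
  induction k with
  | zero => ext <;> simp [one_def]
  | succ k ih =>
      rw [pow_succ, ih]
      ext <;> simp [mul_def, Nat.choose_succ_succ, Nat.choose_one_right] <;> push_cast <;> ring

end Heis

theorem heis_key (p : ℕ) (hp : p.Prime) :
    ∃ f : FreeGroup Bool →* Heis (p ^ 2), Function.Surjective f ∧
      ∀ q : Heis (p ^ 2), q ^ p ≠ f ⁅FreeGroup.of true, FreeGroup.of false⁆ := by
  haveI : Fact p.Prime := ⟨hp⟩
  haveI : NeZero (p ^ 2) := ⟨pow_ne_zero 2 hp.ne_zero⟩
  set A : Heis (p ^ 2) := ⟨1, 0, 0⟩ with hA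
  set B : Heis (p ^ 2) := ⟨0, 1, 0⟩ with hB
  refine ⟨FreeGroup.lift (fun t => if t then A else B), ?_, ?_⟩ <;>
    set f : FreeGroup Bool →* Heis (p ^ 2) := FreeGroup.lift (fun t => if t then A else B) with hf
  all_goals {
    have hfa : f (FreeGroup.of true) = A := by simp [hf]
    have hfb : f (FreeGroup.of false) = B := by simp [hf]
    have hcast : ∀ x : ZMod (p ^ 2), ((x.val : ℕ) : ZMod (p ^ 2)) = x := fun x => by
      rw [ZMod.natCast_val, ZMod.cast_id]
    have hcomm : f ⁅FreeGroup.of true, FreeGroup.of false⁆ = (⟨0, 0, 1⟩ : Heis (p ^ 2)) := by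
      rw [map_commutatorElement, hfa, hfb, commutatorElement_def]
      ext <;> simp [Heis.mul_def, Heis.inv_def, hA, hB]
    first
    | { rintro ⟨x, y, z⟩
        refine ⟨FreeGroup.of true ^ x.val * FreeGroup.of false ^ y.val *
          ⁅FreeGroup.of true, FreeGroup.of false⁆ ^ (z - x * y).val, ?_⟩
        rw [map_mul, map_mul, map_pow, map_pow, map_pow, hfa, hfb, hcomm]
        rw [Heis.pow_def, Heis.pow_def, Heis.pow_def]
        ext <;> simp [Heis.mul_def, hA, hB, hcast] <;> ring }
    | { intro q hq
        rw [hcomm, Heis.pow_def, Heis.mk.injEq] at hq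
        obtain ⟨h1, h2, h3⟩ := hq
        have hx : ((q.x.val : ℕ) : ZMod p) = 0 := by
          have e1 : ((p * q.x.val : ℕ) : ZMod (p ^ 2)) = 0 := by push_cast [hcast]; exact h1
          rw [ZMod.natCast_eq_zero_iff] at e1 ⊢
          have e2 : p * p ∣ p * q.x.val := by rw [← pow_two]; exact e1
          exact (mul_dvd_mul_iff_left hp.ne_zero).mp e2
        have hdvd : p ∣ p ^ 2 := dvd_pow_self p two_ne_zero
        have := congrArg (ZMod.castHom hdvd (ZMod p)) h3
        rw [map_one, map_add, map_mul, map_mul, map_mul, map_natCast, map_natCast] at this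
        simp only [ZMod.castHom_apply, ← ZMod.natCast_val] at this
        rw [hx, ZMod.natCast_self] at this
        simp at this }
  }

/-- In the free group `F` on two generators `a, b`, for every prime `p` the
commutator `[a,b]` is not a `p`-th power: there is a finite `p`-group quotient
of `F` in which the image of `[a,b]` is not a `p`-th power. -/
theorem commutator_not_pth_power (p : ℕ) (hp : p.Prime) :
    ∃ Q : GrpCat, Finite Q ∧ IsPGroup p Q ∧
      ∃ f : FreeGroup Bool →* Q, Function.Surjective f ∧
        ∀ q : Q, q ^ p ≠ f ⁅FreeGroup.of true, FreeGroup.of false⁆ := by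
  haveI : Fact p.Prime := ⟨hp⟩
  haveI : NeZero (p ^ 2) := ⟨pow_ne_zero 2 hp.ne_zero⟩
  obtain ⟨f, hsurj, hpow⟩ := heis_key p hp
  refine ⟨GrpCat.of (ULift (Heis (p ^ 2))), ?_, ?_, ?_⟩
  · exact inferInstanceAs (Finite (ULift (Heis (p ^ 2))))
  · refine IsPGroup.of_card (n := 6) ?_
    show Nat.card (ULift (Heis (p ^ 2))) = p ^ 6
    rw [Nat.card_ulift, Nat.card_congr Heis.equivProd]
    simp [Nat.card_zmod]
    ring
  · let e : ULift (Heis (p ^ 2)) ≃* Heis (p ^ 2) := MulEquiv.ulift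
    refine ⟨e.symm.toMonoidHom.comp f, fun q => ?_, fun q hq => ?_⟩
    · obtain ⟨w, hw⟩ := hsurj (e q)
      exact ⟨w, by simp [hw]⟩
    · apply hpow (e q)
      have := congrArg e hq
      rw [map_pow] at this
      simpa using this
end
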